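/- For every real y with 0 < 2y ≤ 1, the integral E_0(y) = ∫_0^∞ exp(-y(v + 1/v)) dv/v satisfies E_0(y) ≥ 2∫_{2y}^1 e^{-v} dv/v. -/

import Mathlib

open MeasureTheory Real Set

private lemma f_cont (y : ℝ) : ContinuousOn (fun v : ℝ => Real.exp (-(y * (v + 1 / v))) / v)
    {v : ℝ | v ≠ 0} := by
  apply ContinuousOn.div
  · apply Real.continuous_exp.comp_continuousOn
    apply ContinuousOn.neg
    apply ContinuousOn.mul continuousOn_const
    exact continuousOn_id.add (continuousOn_const.div continuousOn_id fun x hx => hx)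
  · exact continuousOn_id
  · exact fun x hx => hx

private lemma f_meas (y : ℝ) (s : Set ℝ) (hs : MeasurableSet s) (h : s ⊆ {v : ℝ | v ≠ 0}) :
    AEStronglyMeasurable (fun v : ℝ => Real.exp (-(y * (v + 1 / v))) / v)
      (volume.restrict s) :=
  ((f_cont y).mono h).aestronglyMeasurable hs

/-- integrable on Ioi 1 -/
private lemma f_int1 (y : ℝ) (hy : 0 < y) :
    IntegrableOn (fun v : ℝ => Real.exp (-(y * (v + 1 / v))) / v) (Ioi 1) := by
  apply Integrable.mono' (exp_neg_integrableOn_Ioi 1 hy)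
  · exact f_meas y _ measurableSet_Ioi (fun x hx => by
      simp only [mem_Ioi] at hx; exact ne_of_gt (lt_trans one_pos hx))
  · filter_upwards [ae_restrict_mem measurableSet_Ioi] with v hv
    simp only [mem_Ioi] at hv
    have hv0 : (0:ℝ) < v := lt_trans one_pos hv
    rw [Real.norm_eq_abs, abs_of_nonneg (div_nonneg (Real.exp_nonneg _) hv0.le)]
    have h1 : Real.exp (-(y * (v + 1 / v))) ≤ Real.exp (-y * v) := by
      apply Real.exp_le_exp.mpr
      have : y * v ≤ y * (v + 1 / v) := by nlinarith [one_div_pos.mpr hv0]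
      linarith
    calc Real.exp (-(y * (v + 1 / v))) / v ≤ Real.exp (-y * v) / 1 := by
          gcongr
      _ = Real.exp (-y * v) := by rw [div_one]

/-- integrable on Ioo 0 1 -/
private lemma f_int0 (y : ℝ) (hy : 0 < y) :
    IntegrableOn (fun v : ℝ => Real.exp (-(y * (v + 1 / v))) / v) (Ioo 0 1) := by
  apply Integrable.mono' (g := fun _ : ℝ => 4 / y ^ 2)
    ((integrableOn_const_iff).mpr (Or.inr measure_Ioo_lt_top))
  · exact f_meas y _ measurableSet_Ioo (fun x hx => ne_of_gt hx.1)
  · filter_upwards [ae_restrict_mem measurableSet_Ioo] with v hv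
    obtain ⟨hv0, hv1⟩ := hv
    rw [Real.norm_eq_abs, abs_of_nonneg (div_nonneg (Real.exp_nonneg _) hv0.le)]
    have ht : (0:ℝ) < y / v := div_pos hy hv0
    have hkey : (y / v) ^ 2 / 4 ≤ Real.exp (y / v) := by
      have h2 : y / v / 2 ≤ Real.exp (y / v / 2) := by
        linarith [Real.add_one_le_exp (y / v / 2)]
      have := mul_le_mul h2 h2 (by positivity) (Real.exp_nonneg _)
      rw [← Real.exp_add] at this
      calc (y / v) ^ 2 / 4 = (y / v / 2) * (y / v / 2) := by ring
        _ ≤ Real.exp (y / v / 2 + y / v / 2) := this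
        _ = Real.exp (y / v) := by ring_nf
    have hexple : Real.exp (-(y * (v + 1 / v))) ≤ Real.exp (-(y / v)) := by
      apply Real.exp_le_exp.mpr
      have : y / v ≤ y * (v + 1 / v) := by
        rw [div_eq_mul_one_div]
        nlinarith [one_div_pos.mpr hv0]
      linarith
    have hexpv : Real.exp (-(y / v)) ≤ 4 * v ^ 2 / y ^ 2 := by
      rw [Real.exp_neg]
      rw [inv_le_iff_one_le_mul₀' (Real.exp_pos _)]
      have h4 : (0:ℝ) < 4 * v ^ 2 / y ^ 2 := by positivity
      calc (1:ℝ) = (4 * v ^ 2 / y ^ 2) * ((y/v)^2/4) := by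
            field_simp
        _ ≤ (4 * v ^ 2 / y ^ 2) * Real.exp (y / v) := by
            exact mul_le_mul_of_nonneg_left hkey h4.le
        _ = Real.exp (y / v) * (4 * v ^ 2 / y ^ 2) := by ring
    calc Real.exp (-(y * (v + 1 / v))) / v ≤ (4 * v ^ 2 / y ^ 2) / v := by
          gcongr
          exact hexple.trans hexpv
      _ = 4 * v / y ^ 2 := by field_simp
      _ ≤ 4 / y ^ 2 := by
          gcongr
          linarith

/-- inversion symmetry -/
private lemma f_symm (y : ℝ) :
    (∫ v in Ioo (0:ℝ) 1, Real.exp (-(y * (v + 1 / v))) / v)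
      = ∫ v in Ioi (1:ℝ), Real.exp (-(y * (v + 1 / v))) / v := by
  have himg : (fun x : ℝ => x⁻¹) '' Ioi 1 = Ioo 0 1 := by
    ext x
    constructor
    · rintro ⟨u, hu, rfl⟩
      simp only [mem_Ioi] at hu
      exact ⟨inv_pos.mpr (lt_trans one_pos hu), inv_lt_one_of_one_lt₀ hu⟩
    · rintro ⟨hx0, hx1⟩
      exact ⟨x⁻¹, (one_lt_inv₀ hx0).mpr hx1, inv_inv x⟩
  have hderiv : ∀ x ∈ Ioi (1:ℝ), HasDerivWithinAt (fun x : ℝ => x⁻¹)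
      (-(x ^ 2)⁻¹) (Ioi 1) x := fun x hx =>
    (hasDerivAt_inv (ne_of_gt (lt_trans one_pos hx))).hasDerivWithinAt
  have hinj : InjOn (fun x : ℝ => x⁻¹) (Ioi 1) := fun a ha b hb h => by
    have ha0 : a ≠ 0 := ne_of_gt (lt_trans one_pos ha)
    have hb0 : b ≠ 0 := ne_of_gt (lt_trans one_pos hb)
    field_simp at h; exact h.symm ▸ rfl
  rw [← himg,
    integral_image_eq_integral_abs_deriv_smul measurableSet_Ioi hderiv hinj]
  apply setIntegral_congr_fun measurableSet_Ioi
  intro x hx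
  simp only [mem_Ioi] at hx
  have hx0 : (0:ℝ) < x := lt_trans one_pos hx
  simp only [smul_eq_mul, abs_neg, abs_inv, abs_of_nonneg (by positivity : (0:ℝ) ≤ x ^ 2),
    one_div, inv_inv]
  rw [show x⁻¹ + x = x + x⁻¹ from add_comm _ _]
  field_simp

theorem stmt_0 (y : ℝ) (hy : 0 < 2 * y) (hy1 : 2 * y ≤ 1) :
    2 * ∫ v in (2 * y)..1, Real.exp (-v) / v ≤
      ∫ v in Set.Ioi (0 : ℝ), Real.exp (-(y * (v + 1 / v))) / v := by
  have hy0 : 0 < y := by linarith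
  set f : ℝ → ℝ := fun v => Real.exp (-(y * (v + 1 / v))) / v with hf
  set c : ℝ := 1 / (2 * y) with hc
  have hc1 : 1 ≤ c := by
    rw [hc, le_div_iff₀ hy]; linarith
  have hfnonneg : ∀ v : ℝ, 0 < v → 0 ≤ f v := fun v hv =>
    div_nonneg (Real.exp_nonneg _) hv.le
  -- step 1 : split
  have hsplit : (∫ v in Set.Ioi (0:ℝ), f v)
      = (∫ v in Ioo (0:ℝ) 1, f v) + ∫ v in Ioi (1:ℝ), f v := by
    rw [← Set.Ioo_union_Ici_eq_Ioi (zero_lt_one), setIntegral_union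
      (by rw [Set.disjoint_left]; intro a ha hb; exact absurd ha.2 (not_lt.mpr hb))
      measurableSet_Ici (f_int0 y hy0) ((integrableOn_Ici_iff_integrableOn_Ioi).mpr (f_int1 y hy0)),
      integral_Ici_eq_integral_Ioi]
  have hsymm := f_symm y
  -- step: ∫ Ioc 1 c f ≤ ∫ Ioi 1 f
  have hmono : (∫ v in Ioc (1:ℝ) c, f v) ≤ ∫ v in Ioi (1:ℝ), f v := by
    apply setIntegral_mono_set (f_int1 y hy0)
    · filter_upwards [ae_restrict_mem measurableSet_Ioi] with v hv
      exact hfnonneg v (lt_trans one_pos hv)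
    · exact HasSubset.Subset.eventuallyLE Set.Ioc_subset_Ioi_self
  -- pointwise comparison on Ioc 1 c
  have hpt : (∫ v in Ioc (1:ℝ) c, Real.exp (-(2 * y * v)) / v) ≤ ∫ v in Ioc (1:ℝ) c, f v := by
    apply setIntegral_mono_on
    · apply (ContinuousOn.integrableOn_Icc ?_).mono_set Set.Ioc_subset_Icc_self
      apply ContinuousOn.div
      · exact (Real.continuous_exp.comp (by continuity)).continuousOn
      · exact continuousOn_id
      · intro x hx; have := hx.1; positivity
    · exact (f_int1 y hy0).mono_set Set.Ioc_subset_Ioi_self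
    · exact measurableSet_Ioc
    · intro v hv
      have hv1 : (1:ℝ) < v := hv.1
      have hv0 : (0:ℝ) < v := lt_trans one_pos hv1
      simp only [hf]
      have h : Real.exp (-(2*y*v)) ≤ Real.exp (-(y*(v+1/v))) := by
        apply Real.exp_le_exp.mpr
        have h1v : 1 / v ≤ v := by rw [div_le_iff₀ hv0]; nlinarith
        nlinarith
      gcongr
  -- scaling: ∫ v in 1..c, exp(-(2y v))/v = ∫ v in 2y..1, exp(-v)/v
  have hscale : (∫ v in (1:ℝ)..c, Real.exp (-(2 * y * v)) / v)
      = ∫ v in (2 * y)..1, Real.exp (-v) / v := by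
    have := intervalIntegral.smul_integral_comp_mul_left
      (a := (1:ℝ)) (b := c) (fun u => Real.exp (-u) / u) (2 * y)
    rw [show 2 * y * 1 = 2 * y by ring, show 2 * y * c = 1 by rw [hc]; field_simp] at this
    rw [← this, smul_eq_mul, ← intervalIntegral.integral_const_mul]
    apply intervalIntegral.integral_congr
    intro x hx
    rw [Set.uIcc_of_le hc1] at hx
    have hx1 : (1:ℝ) ≤ x := hx.1
    have hx0 : (0:ℝ) < x := lt_of_lt_of_le one_pos hx1
    field_simp
  have hIoc : (∫ v in Ioc (1:ℝ) c, Real.exp (-(2 * y * v)) / v)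
      = ∫ v in (1:ℝ)..c, Real.exp (-(2 * y * v)) / v := by
    rw [intervalIntegral.integral_of_le hc1]
  rw [hsplit, hsymm]
  have key : (∫ v in (2*y)..1, Real.exp (-v) / v) ≤ ∫ v in Ioi (1:ℝ), f v := by
    rw [← hscale, ← hIoc]
    exact le_trans hpt hmono
  linarith
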